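/- Let F be the free group on x_1, …, x_{n-1}, m_1, …, m_g, l_1, …, l_g, and for k ≥ 1 define the map 𝔭_k : (F_k/F_{k+1})^{2g+n-1} → F_{k+1}/F_{k+2} by (α_1,…,α_{n-1},β_1,…,β_g,γ_1,…,γ_g) ↦ ∏_{i=1}^{n-1}[x_i,α_i] · ∏_{j=1}^{g}[m_j,γ_j][β_j,l_j]. Then 𝔭_k is a well-defined surjective group homomorphism. -/

import Mathlib

/-- `lcs G k` is the `k`-th term `G_k` of the lower central series, 1-indexed:
`G_1 = G`, `G_{k+1} = [G, G_k]`. -/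
def lcs (G : Type*) [Group G] (k : ℕ) : Subgroup G := (⊤ : Subgroup G).lowerCentralSeries (k - 1)

instance lcs_normal (G : Type*) [Group G] (k : ℕ) : (lcs G k).Normal :=
  (inferInstance : ((⊤ : Subgroup G).lowerCentralSeries (k - 1)).Normal)

lemma lcs_antitone {G : Type*} [Group G] {k l : ℕ} (h : k ≤ l) : lcs G l ≤ lcs G k :=
  Subgroup.lowerCentralSeries_antitone ⊤ (Nat.sub_le_sub_right h 1)

/-- The natural projection `G/G_l → G/G_k` for `k ≤ l`. -/
def lcsProj (G : Type*) [Group G] (l k : ℕ) (h : k ≤ l) :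
    G ⧸ lcs G l →* G ⧸ lcs G k :=
  QuotientGroup.map _ _ (MonoidHom.id G) (fun _ hx => lcs_antitone h hx)
/-- The commutator used in the paper: `[x,y] = x⁻¹y⁻¹xy`. -/
def pcomm {G : Type*} [Group G] (x y : G) : G := x⁻¹ * y⁻¹ * x * y

/-- The free group on `x_1,…,x_{n-1}, m_1,…,m_g, l_1,…,l_g`. -/
abbrev FG (n g : ℕ) := FreeGroup (Fin (n - 1) ⊕ (Fin g ⊕ Fin g))

def xgen {n g : ℕ} (i : Fin (n - 1)) : FG n g := FreeGroup.of (Sum.inl i)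
def mgen {n g : ℕ} (j : Fin g) : FG n g := FreeGroup.of (Sum.inr (Sum.inl j))
def lgen {n g : ℕ} (j : Fin g) : FG n g := FreeGroup.of (Sum.inr (Sum.inr j))

/-- The element `∏ᵢ [x_i, α_i] · ∏ⱼ [m_j, γ_j][β_j, l_j]` representing
`𝔭_k(α₁,…,α_{n-1},β₁,…,β_g,γ₁,…,γ_g)`. -/
def pk {n g : ℕ} (α : Fin (n - 1) → FG n g) (β γ : Fin g → FG n g) : FG n g :=
  ((List.finRange (n - 1)).map (fun i => pcomm (xgen i) (α i))).prod *
  ((List.finRange g).map (fun j => pcomm (mgen j) (γ j) * pcomm (β j) (lgen j))).prod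

namespace Stmt11Aux

open scoped commutatorElement IsMulCommutative

variable {G : Type*} [Group G]

lemma lcs_succ_eq (G : Type*) [Group G] {k : ℕ} (hk : 1 ≤ k) :
    lcs G (k + 1) = ⁅lcs G k, (⊤ : Subgroup G)⁆ := by
  obtain ⟨m, rfl⟩ : ∃ m, k = m + 1 := ⟨k - 1, (Nat.succ_pred_eq_of_pos hk).symm⟩
  show (⊤ : Subgroup G).lowerCentralSeries (m + 1 + 1 - 1) =
    ⁅(⊤ : Subgroup G).lowerCentralSeries (m + 1 - 1), ⊤⁆
  simp only [Nat.add_sub_cancel]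
  rfl

lemma comm_mem {k : ℕ} (hk : 1 ≤ k) {a : G} (ha : a ∈ lcs G k) (x : G) :
    ⁅a, x⁆ ∈ lcs G (k + 1) := by
  rw [lcs_succ_eq G hk]
  exact Subgroup.commutator_mem_commutator ha (Subgroup.mem_top x)

lemma comm_mem' {k : ℕ} (hk : 1 ≤ k) {a : G} (ha : a ∈ lcs G k) (x : G) :
    ⁅x, a⁆ ∈ lcs G (k + 1) := by
  have := inv_mem (comm_mem hk ha x)
  rwa [commutatorElement_inv] at this

lemma mk_center {k : ℕ} {z : G} (hz : z ∈ lcs G (k + 1)) :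
    ((z : G) : G ⧸ lcs G (k + 2)) ∈ Subgroup.center (G ⧸ lcs G (k + 2)) := by
  rw [Subgroup.mem_center_iff]
  intro w
  induction w using QuotientGroup.induction_on with
  | _ u =>
    rw [← QuotientGroup.mk_mul, ← QuotientGroup.mk_mul, QuotientGroup.eq]
    have h1 : ⁅z⁻¹, u⁻¹⁆ ∈ lcs G (k + 1 + 1) :=
      comm_mem (Nat.le_add_left 1 k) (inv_mem hz) u⁻¹
    have h2 : (u * z)⁻¹ * (z * u) = ⁅z⁻¹, u⁻¹⁆ := by
      simp only [commutatorElement_def]; group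
    rw [h2]; exact h1

lemma mk_conj {k : ℕ} {z : G} (hz : z ∈ lcs G (k + 1)) (w : G) :
    ((w * z * w⁻¹ : G) : G ⧸ lcs G (k + 2)) = ((z : G) : G ⧸ lcs G (k + 2)) := by
  have hc := Subgroup.mem_center_iff.mp (mk_center hz) ((w : G) : G ⧸ lcs G (k + 2))
  rw [QuotientGroup.mk_mul, QuotientGroup.mk_mul, QuotientGroup.mk_inv, hc, mul_assoc,
    mul_inv_cancel, mul_one]

lemma mk_comm_mul_right {k : ℕ} {a : G} (x y : G) (hy : ⁅a, y⁆ ∈ lcs G (k + 1)) :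
    ((⁅a, x * y⁆ : G) : G ⧸ lcs G (k + 2)) =
      ((⁅a, x⁆ : G) : G ⧸ lcs G (k + 2)) * ((⁅a, y⁆ : G) : G ⧸ lcs G (k + 2)) := by
  have hid : ⁅a, x * y⁆ = ⁅a, x⁆ * (x * ⁅a, y⁆ * x⁻¹) := by
    simp only [commutatorElement_def]; group
  rw [hid, QuotientGroup.mk_mul, mk_conj hy x]

lemma mk_comm_mul_left {k : ℕ} {a b : G} (y : G) (hb : ⁅b, y⁆ ∈ lcs G (k + 1)) :
    ((⁅a * b, y⁆ : G) : G ⧸ lcs G (k + 2)) =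
      ((⁅b, y⁆ : G) : G ⧸ lcs G (k + 2)) * ((⁅a, y⁆ : G) : G ⧸ lcs G (k + 2)) := by
  have hid : ⁅a * b, y⁆ = (a * ⁅b, y⁆ * a⁻¹) * ⁅a, y⁆ := by
    simp only [commutatorElement_def]; group
  rw [hid, QuotientGroup.mk_mul, mk_conj hb a]

def Dhom {k : ℕ} (hk : 1 ≤ k) {a : G} (ha : a ∈ lcs G k) : G →* G ⧸ lcs G (k + 2) :=
  MonoidHom.mk' (fun x => ((⁅a, x⁆ : G) : G ⧸ lcs G (k + 2)))
    (fun x y => mk_comm_mul_right x y (comm_mem hk ha y))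

@[simp] lemma Dhom_apply {k : ℕ} (hk : 1 ≤ k) {a : G} (ha : a ∈ lcs G k) (x : G) :
    Dhom hk ha x = ((⁅a, x⁆ : G) : G ⧸ lcs G (k + 2)) := rfl

lemma mk_comm_inv_right {k : ℕ} (hk : 1 ≤ k) {a : G} (ha : a ∈ lcs G k) (y : G) :
    ((⁅a, y⁻¹⁆ : G) : G ⧸ lcs G (k + 2)) = (((⁅a, y⁆ : G) : G ⧸ lcs G (k + 2)))⁻¹ := by
  have := map_inv (Dhom hk ha) y
  simpa using this

lemma mk_comm_inv_left {k : ℕ} (hk : 1 ≤ k) {a : G} (ha : a ∈ lcs G k) (y : G) :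
    ((⁅a⁻¹, y⁆ : G) : G ⧸ lcs G (k + 2)) = (((⁅a, y⁆ : G) : G ⧸ lcs G (k + 2)))⁻¹ := by
  have h := mk_comm_mul_left (a := a) (b := a⁻¹) y (comm_mem hk (inv_mem ha) y)
  rw [mul_inv_cancel] at h
  have h1 : ((⁅(1 : G), y⁆ : G) : G ⧸ lcs G (k + 2)) = 1 := by
    simp [commutatorElement_def]
  rw [h1] at h
  exact eq_inv_of_mul_eq_one_left h.symm

lemma pcomm_eq (x y : G) : pcomm x y = ⁅x⁻¹, y⁻¹⁆ := by
  simp [pcomm, commutatorElement_def]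

@[simp] lemma pcomm_one (x : G) : pcomm x 1 = 1 := by simp [pcomm]
@[simp] lemma one_pcomm (y : G) : pcomm 1 y = 1 := by simp [pcomm]

lemma pcomm_mem {k : ℕ} (hk : 1 ≤ k) {b : G} (hb : b ∈ lcs G k) (x : G) :
    pcomm x b ∈ lcs G (k + 1) := by
  rw [pcomm_eq]; exact comm_mem' hk (inv_mem hb) x⁻¹

lemma pcomm_mem' {k : ℕ} (hk : 1 ≤ k) {b : G} (hb : b ∈ lcs G k) (y : G) :
    pcomm b y ∈ lcs G (k + 1) := by
  rw [pcomm_eq]; exact comm_mem hk (inv_mem hb) y⁻¹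

lemma mk_pcomm_snd {k : ℕ} (hk : 1 ≤ k) {b : G} (hb : b ∈ lcs G k) (x : G) :
    ((pcomm x b : G) : G ⧸ lcs G (k + 2)) = ((⁅b⁻¹, x⁆ : G) : G ⧸ lcs G (k + 2)) := by
  rw [pcomm_eq, ← commutatorElement_inv, QuotientGroup.mk_inv,
    mk_comm_inv_right hk (inv_mem hb) x, inv_inv]

lemma mk_pcomm_fst {k : ℕ} (hk : 1 ≤ k) {b : G} (hb : b ∈ lcs G k) (y : G) :
    ((pcomm b y : G) : G ⧸ lcs G (k + 2)) = ((⁅b, y⁆ : G) : G ⧸ lcs G (k + 2)) := by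
  rw [pcomm_eq, mk_comm_inv_right hk (inv_mem hb) y, mk_comm_inv_left hk hb y, inv_inv]

lemma mk_pcomm_snd_mul {k : ℕ} (hk : 1 ≤ k) {b b' : G} (hb : b ∈ lcs G k)
    (hb' : b' ∈ lcs G k) (x : G) :
    ((pcomm x (b * b') : G) : G ⧸ lcs G (k + 2)) =
      ((pcomm x b : G) : G ⧸ lcs G (k + 2)) * ((pcomm x b' : G) : G ⧸ lcs G (k + 2)) := by
  rw [pcomm_eq, mul_inv_rev, mk_comm_mul_right b'⁻¹ b⁻¹ (comm_mem' hk (inv_mem hb) x⁻¹),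
    ← pcomm_eq, ← pcomm_eq]
  exact (Subgroup.mem_center_iff.mp (mk_center (pcomm_mem hk hb x)) _)

lemma mk_pcomm_snd_add1 {k : ℕ} (hk : 1 ≤ k) {b e : G} (hb : b ∈ lcs G k)
    (he : e ∈ lcs G (k + 1)) (x : G) :
    ((pcomm x (b * e) : G) : G ⧸ lcs G (k + 2)) = ((pcomm x b : G) : G ⧸ lcs G (k + 2)) := by
  rw [pcomm_eq, mul_inv_rev, mk_comm_mul_right e⁻¹ b⁻¹ (comm_mem' hk (inv_mem hb) x⁻¹)]
  have h1 : ((⁅x⁻¹, e⁻¹⁆ : G) : G ⧸ lcs G (k + 2)) = 1 :=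
    (QuotientGroup.eq_one_iff _).mpr (comm_mem' (Nat.le_add_left 1 k) (inv_mem he) x⁻¹)
  rw [h1, one_mul, ← pcomm_eq]

lemma mk_pcomm_fst_mul {k : ℕ} (hk : 1 ≤ k) {b b' : G} (hb : b ∈ lcs G k)
    (hb' : b' ∈ lcs G k) (y : G) :
    ((pcomm (b * b') y : G) : G ⧸ lcs G (k + 2)) =
      ((pcomm b y : G) : G ⧸ lcs G (k + 2)) * ((pcomm b' y : G) : G ⧸ lcs G (k + 2)) := by
  rw [pcomm_eq, mul_inv_rev, mk_comm_mul_left y⁻¹ (comm_mem hk (inv_mem hb) y⁻¹),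
    ← pcomm_eq, ← pcomm_eq]

lemma mk_pcomm_fst_add1 {k : ℕ} (hk : 1 ≤ k) {b e : G} (hb : b ∈ lcs G k)
    (he : e ∈ lcs G (k + 1)) (y : G) :
    ((pcomm (b * e) y : G) : G ⧸ lcs G (k + 2)) = ((pcomm b y : G) : G ⧸ lcs G (k + 2)) := by
  rw [pcomm_eq, mul_inv_rev, mk_comm_mul_left y⁻¹ (comm_mem hk (inv_mem hb) y⁻¹)]
  have h1 : ((⁅e⁻¹, y⁻¹⁆ : G) : G ⧸ lcs G (k + 2)) = 1 :=
    (QuotientGroup.eq_one_iff _).mpr (comm_mem (Nat.le_add_left 1 k) (inv_mem he) y⁻¹)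
  rw [h1, mul_one, ← pcomm_eq]



lemma mk_list_prod {M : Type*} [Group M] (N : Subgroup M) [N.Normal] {ι : Type*}
    (l : List ι) (f : ι → M) (F : ι → (Subgroup.center (M ⧸ N)))
    (h : ∀ i, ((F i : M ⧸ N)) = ((f i : M) : M ⧸ N)) :
    (((l.map f).prod : M) : M ⧸ N) =
      (((l.map F).prod : Subgroup.center (M ⧸ N)) : M ⧸ N) := by
  induction l with
  | nil => simp
  | cons a t ih => simp [h, ih]

variable {n g : ℕ}

lemma pk_mk {k : ℕ} (α : Fin (n - 1) → FG n g) (β γ : Fin g → FG n g)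
    (A : Fin (n - 1) → (Subgroup.center (FG n g ⧸ lcs (FG n g) (k + 2))))
    (B : Fin g → (Subgroup.center (FG n g ⧸ lcs (FG n g) (k + 2))))
    (hA : ∀ i, ((A i : FG n g ⧸ lcs (FG n g) (k + 2))) =
      ((pcomm (xgen i) (α i) : FG n g) : FG n g ⧸ lcs (FG n g) (k + 2)))
    (hB : ∀ j, ((B j : FG n g ⧸ lcs (FG n g) (k + 2))) =
      ((pcomm (mgen j) (γ j) * pcomm (β j) (lgen j) : FG n g) : FG n g ⧸ lcs (FG n g) (k + 2))) :
    ((pk α β γ : FG n g) : FG n g ⧸ lcs (FG n g) (k + 2)) =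
      (((∏ i, A i) * ∏ j, B j : (Subgroup.center (FG n g ⧸ lcs (FG n g) (k + 2)))) :
        FG n g ⧸ lcs (FG n g) (k + 2)) := by
  rw [pk, QuotientGroup.mk_mul, mk_list_prod _ _ _ A hA, mk_list_prod _ _ _ B hB,
    Fin.prod_univ_def, Fin.prod_univ_def]
  rfl

def Afac {k : ℕ} (hk : 1 ≤ k) (α : Fin (n - 1) → FG n g)
    (hα : ∀ i, α i ∈ lcs (FG n g) k) (i : Fin (n - 1)) :
    (Subgroup.center (FG n g ⧸ lcs (FG n g) (k + 2))) :=
  ⟨((pcomm (xgen i) (α i) : FG n g) : FG n g ⧸ lcs (FG n g) (k + 2)),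
    mk_center (pcomm_mem hk (hα i) _)⟩

def Bfac {k : ℕ} (hk : 1 ≤ k) (β γ : Fin g → FG n g)
    (hβ : ∀ j, β j ∈ lcs (FG n g) k) (hγ : ∀ j, γ j ∈ lcs (FG n g) k) (j : Fin g) :
    (Subgroup.center (FG n g ⧸ lcs (FG n g) (k + 2))) :=
  ⟨((pcomm (mgen j) (γ j) * pcomm (β j) (lgen j) : FG n g) : FG n g ⧸ lcs (FG n g) (k + 2)),
    by rw [QuotientGroup.mk_mul]
       exact mul_mem (mk_center (pcomm_mem hk (hγ j) _)) (mk_center (pcomm_mem' hk (hβ j) _))⟩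

lemma pk_mk_canon {k : ℕ} (hk : 1 ≤ k) (α : Fin (n - 1) → FG n g) (β γ : Fin g → FG n g)
    (hα : ∀ i, α i ∈ lcs (FG n g) k) (hβ : ∀ j, β j ∈ lcs (FG n g) k)
    (hγ : ∀ j, γ j ∈ lcs (FG n g) k) :
    ((pk α β γ : FG n g) : FG n g ⧸ lcs (FG n g) (k + 2)) =
      (((∏ i, Afac hk α hα i) * ∏ j, Bfac hk β γ hβ hγ j :
        (Subgroup.center (FG n g ⧸ lcs (FG n g) (k + 2)))) :
        FG n g ⧸ lcs (FG n g) (k + 2)) :=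
  pk_mk α β γ _ _ (fun _ => rfl) (fun _ => rfl)

lemma pk_hom {k : ℕ} (hk : 1 ≤ k) (α α' : Fin (n - 1) → FG n g) (β β' γ γ' : Fin g → FG n g)
    (hα : ∀ i, α i ∈ lcs (FG n g) k) (hβ : ∀ j, β j ∈ lcs (FG n g) k)
    (hγ : ∀ j, γ j ∈ lcs (FG n g) k)
    (hα' : ∀ i, α' i ∈ lcs (FG n g) k) (hβ' : ∀ j, β' j ∈ lcs (FG n g) k)
    (hγ' : ∀ j, γ' j ∈ lcs (FG n g) k) :
    ((pk (fun i => α i * α' i) (fun j => β j * β' j) (fun j => γ j * γ' j) : FG n g) :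
        FG n g ⧸ lcs (FG n g) (k + 2)) =
      ((pk α β γ : FG n g) : FG n g ⧸ lcs (FG n g) (k + 2)) *
        ((pk α' β' γ' : FG n g) : FG n g ⧸ lcs (FG n g) (k + 2)) := by
  have hA : ∀ i, (((Afac hk α hα i * Afac hk α' hα' i :
      (Subgroup.center (FG n g ⧸ lcs (FG n g) (k + 2)))) : FG n g ⧸ lcs (FG n g) (k + 2))) =
      ((pcomm (xgen i) (α i * α' i) : FG n g) : FG n g ⧸ lcs (FG n g) (k + 2)) := by
    intro i
    exact (mk_pcomm_snd_mul hk (hα i) (hα' i) (xgen i)).symm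
  have hB : ∀ j, (((Bfac hk β γ hβ hγ j * Bfac hk β' γ' hβ' hγ' j :
      (Subgroup.center (FG n g ⧸ lcs (FG n g) (k + 2)))) : FG n g ⧸ lcs (FG n g) (k + 2))) =
      ((pcomm (mgen j) (γ j * γ' j) * pcomm (β j * β' j) (lgen j) : FG n g) :
        FG n g ⧸ lcs (FG n g) (k + 2)) := by
    intro j
    have h1 := mk_pcomm_snd_mul hk (hγ j) (hγ' j) (mgen j)
    have h2 := mk_pcomm_fst_mul hk (hβ j) (hβ' j) (lgen j)
    rw [QuotientGroup.mk_mul, h1, h2]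
    show (((pcomm (mgen j) (γ j) : FG n g) : FG n g ⧸ lcs (FG n g) (k + 2)) *
        ↑(pcomm (β j) (lgen j) : FG n g)) *
        (((pcomm (mgen j) (γ' j) : FG n g) : FG n g ⧸ lcs (FG n g) (k + 2)) *
        ↑(pcomm (β' j) (lgen j) : FG n g)) = _
    have hc : ((pcomm (β j) (lgen j) : FG n g) : FG n g ⧸ lcs (FG n g) (k + 2)) *
        ↑(pcomm (mgen j) (γ' j) : FG n g) =
        ((pcomm (mgen j) (γ' j) : FG n g) : FG n g ⧸ lcs (FG n g) (k + 2)) *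
        ↑(pcomm (β j) (lgen j) : FG n g) :=
      (Subgroup.mem_center_iff.mp (mk_center (pcomm_mem' hk (hβ j) _)) _).symm
    rw [mul_assoc, mul_assoc]
    congr 1
    rw [← mul_assoc, hc, mul_assoc]
  rw [pk_mk _ _ _ _ _ hA hB, pk_mk_canon hk α β γ hα hβ hγ, pk_mk_canon hk α' β' γ' hα' hβ' hγ']
  have hZ : ((∏ i, (Afac hk α hα i * Afac hk α' hα' i)) *
      ∏ j, (Bfac hk β γ hβ hγ j * Bfac hk β' γ' hβ' hγ' j)) =
      (((∏ i, Afac hk α hα i) * ∏ j, Bfac hk β γ hβ hγ j) *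
        ((∏ i, Afac hk α' hα' i) * ∏ j, Bfac hk β' γ' hβ' hγ' j)) := by
    rw [Finset.prod_mul_distrib, Finset.prod_mul_distrib, mul_mul_mul_comm]
  rw [hZ]
  rfl

lemma pk_wd {k : ℕ} (hk : 1 ≤ k) (α α' : Fin (n - 1) → FG n g) (β β' γ γ' : Fin g → FG n g)
    (hα : ∀ i, α i ∈ lcs (FG n g) k) (hβ : ∀ j, β j ∈ lcs (FG n g) k)
    (hγ : ∀ j, γ j ∈ lcs (FG n g) k)
    (dα : ∀ i, (α i)⁻¹ * α' i ∈ lcs (FG n g) (k + 1))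
    (dβ : ∀ j, (β j)⁻¹ * β' j ∈ lcs (FG n g) (k + 1))
    (dγ : ∀ j, (γ j)⁻¹ * γ' j ∈ lcs (FG n g) (k + 1)) :
    ((pk α' β' γ' : FG n g) : FG n g ⧸ lcs (FG n g) (k + 2)) =
      ((pk α β γ : FG n g) : FG n g ⧸ lcs (FG n g) (k + 2)) := by
  have hA : ∀ i, ((Afac hk α hα i : FG n g ⧸ lcs (FG n g) (k + 2))) =
      ((pcomm (xgen i) (α' i) : FG n g) : FG n g ⧸ lcs (FG n g) (k + 2)) := by
    intro i
    have h : α' i = α i * ((α i)⁻¹ * α' i) := by group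
    rw [h, mk_pcomm_snd_add1 hk (hα i) (dα i)]
    rfl
  have hB : ∀ j, ((Bfac hk β γ hβ hγ j : FG n g ⧸ lcs (FG n g) (k + 2))) =
      ((pcomm (mgen j) (γ' j) * pcomm (β' j) (lgen j) : FG n g) :
        FG n g ⧸ lcs (FG n g) (k + 2)) := by
    intro j
    have h1 : γ' j = γ j * ((γ j)⁻¹ * γ' j) := by group
    have h2 : β' j = β j * ((β j)⁻¹ * β' j) := by group
    rw [h1, h2, QuotientGroup.mk_mul, mk_pcomm_snd_add1 hk (hγ j) (dγ j),
      mk_pcomm_fst_add1 hk (hβ j) (dβ j)]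
    rfl
  rw [pk_mk α' β' γ' _ _ hA hB, pk_mk_canon hk α β γ hα hβ hγ]

lemma pk_ones : (pk (fun _ => 1) (fun _ => 1) (fun _ => 1) : FG n g) = 1 := by
  simp [pk, pcomm]

lemma pk_inv_mk {k : ℕ} (hk : 1 ≤ k) (α : Fin (n - 1) → FG n g) (β γ : Fin g → FG n g)
    (hα : ∀ i, α i ∈ lcs (FG n g) k) (hβ : ∀ j, β j ∈ lcs (FG n g) k)
    (hγ : ∀ j, γ j ∈ lcs (FG n g) k) :
    ((pk (fun i => (α i)⁻¹) (fun j => (β j)⁻¹) (fun j => (γ j)⁻¹) : FG n g) :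
        FG n g ⧸ lcs (FG n g) (k + 2)) =
      (((pk α β γ : FG n g) : FG n g ⧸ lcs (FG n g) (k + 2)))⁻¹ := by
  have h := pk_hom hk α (fun i => (α i)⁻¹) β (fun j => (β j)⁻¹) γ (fun j => (γ j)⁻¹)
    hα hβ hγ (fun i => inv_mem (hα i)) (fun j => inv_mem (hβ j)) (fun j => inv_mem (hγ j))
  simp only [mul_inv_cancel] at h
  rw [pk_ones, QuotientGroup.mk_one] at h
  exact (inv_eq_of_mul_eq_one_right h.symm).symm



variable {n g : ℕ}

lemma pk_single_x {k : ℕ} (hk : 1 ≤ k) {a : FG n g} (ha : a ∈ lcs (FG n g) k)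
    (i0 : Fin (n - 1)) :
    ((pk (fun i => if i = i0 then a⁻¹ else 1) (fun _ => 1) (fun _ => 1) : FG n g) :
        FG n g ⧸ lcs (FG n g) (k + 2)) =
      ((⁅a, xgen i0⁆ : FG n g) : FG n g ⧸ lcs (FG n g) (k + 2)) := by
  have hα : ∀ i, (if i = i0 then a⁻¹ else (1 : FG n g)) ∈ lcs (FG n g) k := by
    intro i; split
    · exact inv_mem ha
    · exact one_mem _
  have hβ : ∀ _j : Fin g, (1 : FG n g) ∈ lcs (FG n g) k := fun _ => one_mem _
  rw [pk_mk_canon hk _ _ _ hα hβ hβ]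
  have hB : ∀ j, Bfac hk (fun _ => (1 : FG n g)) (fun _ => 1) hβ hβ j = 1 := by
    intro j; apply Subtype.ext; simp [Bfac]
  have hA : ∏ i, Afac hk _ hα i = Afac hk _ hα i0 := by
    apply Fintype.prod_eq_single
    intro b hb
    apply Subtype.ext
    show ((pcomm (xgen b) (if b = i0 then a⁻¹ else 1) : FG n g) : FG n g ⧸ lcs (FG n g) (k + 2)) = _
    rw [if_neg hb]
    simp
  rw [Finset.prod_congr rfl (fun j _ => hB j), Finset.prod_const_one, mul_one, hA]
  show ((pcomm (xgen i0) (if i0 = i0 then a⁻¹ else 1) : FG n g) : FG n g ⧸ lcs (FG n g) (k + 2)) = _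
  rw [if_pos rfl, mk_pcomm_snd hk (inv_mem ha), inv_inv]

lemma pk_single_m {k : ℕ} (hk : 1 ≤ k) {a : FG n g} (ha : a ∈ lcs (FG n g) k)
    (j0 : Fin g) :
    ((pk (fun _ => 1) (fun _ => 1) (fun j => if j = j0 then a⁻¹ else 1) : FG n g) :
        FG n g ⧸ lcs (FG n g) (k + 2)) =
      ((⁅a, mgen j0⁆ : FG n g) : FG n g ⧸ lcs (FG n g) (k + 2)) := by
  have hγ : ∀ j, (if j = j0 then a⁻¹ else (1 : FG n g)) ∈ lcs (FG n g) k := by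
    intro j; split
    · exact inv_mem ha
    · exact one_mem _
  have hβ : ∀ _j : Fin g, (1 : FG n g) ∈ lcs (FG n g) k := fun _ => one_mem _
  have h1 : ∀ _i : Fin (n - 1), (1 : FG n g) ∈ lcs (FG n g) k := fun _ => one_mem _
  rw [pk_mk_canon hk _ _ _ h1 hβ hγ]
  have hAone : ∀ i, Afac hk (fun _ => (1 : FG n g)) h1 i = 1 := by
    intro i; apply Subtype.ext; simp [Afac]
  have hB : ∏ j, Bfac hk _ _ hβ hγ j = Bfac hk _ _ hβ hγ j0 := by
    apply Fintype.prod_eq_single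
    intro b hb
    apply Subtype.ext
    show ((pcomm (mgen b) (if b = j0 then a⁻¹ else 1) * pcomm 1 (lgen b) : FG n g) : FG n g ⧸ lcs (FG n g) (k + 2)) = _
    rw [if_neg hb]
    simp
  rw [Finset.prod_congr rfl (fun i _ => hAone i), Finset.prod_const_one, one_mul, hB]
  show ((pcomm (mgen j0) (if j0 = j0 then a⁻¹ else 1) * pcomm 1 (lgen j0) : FG n g) : FG n g ⧸ lcs (FG n g) (k + 2)) = _
  rw [if_pos rfl, one_pcomm, mul_one, mk_pcomm_snd hk (inv_mem ha), inv_inv]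

lemma pk_single_l {k : ℕ} (hk : 1 ≤ k) {a : FG n g} (ha : a ∈ lcs (FG n g) k)
    (j0 : Fin g) :
    ((pk (fun _ => 1) (fun j => if j = j0 then a else 1) (fun _ => 1) : FG n g) :
        FG n g ⧸ lcs (FG n g) (k + 2)) =
      ((⁅a, lgen j0⁆ : FG n g) : FG n g ⧸ lcs (FG n g) (k + 2)) := by
  have hβ : ∀ j, (if j = j0 then a else (1 : FG n g)) ∈ lcs (FG n g) k := by
    intro j; split
    · exact ha
    · exact one_mem _
  have hγ : ∀ _j : Fin g, (1 : FG n g) ∈ lcs (FG n g) k := fun _ => one_mem _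
  have h1 : ∀ _i : Fin (n - 1), (1 : FG n g) ∈ lcs (FG n g) k := fun _ => one_mem _
  rw [pk_mk_canon hk _ _ _ h1 hβ hγ]
  have hAone : ∀ i, Afac hk (fun _ => (1 : FG n g)) h1 i = 1 := by
    intro i; apply Subtype.ext; simp [Afac]
  have hB : ∏ j, Bfac hk _ _ hβ hγ j = Bfac hk _ _ hβ hγ j0 := by
    apply Fintype.prod_eq_single
    intro b hb
    apply Subtype.ext
    show ((pcomm (mgen b) 1 * pcomm (if b = j0 then a else 1) (lgen b) : FG n g) : FG n g ⧸ lcs (FG n g) (k + 2)) = _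
    rw [if_neg hb]
    simp
  rw [Finset.prod_congr rfl (fun i _ => hAone i), Finset.prod_const_one, one_mul, hB]
  show ((pcomm (mgen j0) 1 * pcomm (if j0 = j0 then a else 1) (lgen j0) : FG n g) : FG n g ⧸ lcs (FG n g) (k + 2)) = _
  rw [if_pos rfl, pcomm_one, one_mul, mk_pcomm_fst hk ha]

lemma gen_case {k : ℕ} (hk : 1 ≤ k) {p : FG n g} (hp : p ∈ lcs (FG n g) k) (q : FG n g) :
    ∃ (α : Fin (n - 1) → FG n g) (β γ : Fin g → FG n g),
      (∀ i, α i ∈ lcs (FG n g) k) ∧ (∀ j, β j ∈ lcs (FG n g) k) ∧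
      (∀ j, γ j ∈ lcs (FG n g) k) ∧
      ((⁅p, q⁆ : FG n g) : FG n g ⧸ lcs (FG n g) (k + 2)) = ↑(pk α β γ) := by
  induction q using FreeGroup.induction_on with
  | C1 =>
    refine ⟨fun _ => 1, fun _ => 1, fun _ => 1, fun _ => one_mem _, fun _ => one_mem _,
      fun _ => one_mem _, ?_⟩
    rw [pk_ones]
    simp [commutatorElement_def]
  | of s =>
    rcases s with i0 | j0 | j0
    · exact ⟨fun i => if i = i0 then p⁻¹ else 1, fun _ => 1, fun _ => 1,
        (fun i => by dsimp only; split
                     · exact inv_mem hp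
                     · exact one_mem _),
        fun _ => one_mem _, fun _ => one_mem _, (pk_single_x hk hp i0).symm⟩
    · exact ⟨fun _ => 1, fun _ => 1, fun j => if j = j0 then p⁻¹ else 1,
        fun _ => one_mem _, fun _ => one_mem _,
        (fun j => by dsimp only; split
                     · exact inv_mem hp
                     · exact one_mem _),
        (pk_single_m hk hp j0).symm⟩
    · exact ⟨fun _ => 1, fun j => if j = j0 then p else 1, fun _ => 1,
        fun _ => one_mem _,
        (fun j => by dsimp only; split
                     · exact hp
                     · exact one_mem _),
        fun _ => one_mem _, (pk_single_l hk hp j0).symm⟩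
  | inv_of s ih =>
    obtain ⟨α, β, γ, hα, hβ, hγ, he⟩ := ih
    exact ⟨fun i => (α i)⁻¹, fun j => (β j)⁻¹, fun j => (γ j)⁻¹,
      fun i => inv_mem (hα i), fun j => inv_mem (hβ j), fun j => inv_mem (hγ j),
      by rw [mk_comm_inv_right hk hp, he, pk_inv_mk hk α β γ hα hβ hγ]⟩
  | mul u v ihu ihv =>
    obtain ⟨α, β, γ, hα, hβ, hγ, hue⟩ := ihu
    obtain ⟨α', β', γ', hα', hβ', hγ', hve⟩ := ihv
    exact ⟨fun i => α i * α' i, fun j => β j * β' j, fun j => γ j * γ' j,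
      fun i => mul_mem (hα i) (hα' i), fun j => mul_mem (hβ j) (hβ' j),
      fun j => mul_mem (hγ j) (hγ' j),
      by rw [mk_comm_mul_right u v (comm_mem hk hp v), hue, hve,
        pk_hom hk α α' β β' γ γ' hα hβ hγ hα' hβ' hγ']⟩

lemma surj_core {k : ℕ} (hk : 1 ≤ k) {z : FG n g} (hz : z ∈ lcs (FG n g) (k + 1)) :
    ∃ (α : Fin (n - 1) → FG n g) (β γ : Fin g → FG n g),
      (∀ i, α i ∈ lcs (FG n g) k) ∧ (∀ j, β j ∈ lcs (FG n g) k) ∧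
      (∀ j, γ j ∈ lcs (FG n g) k) ∧
      ((z : FG n g) : FG n g ⧸ lcs (FG n g) (k + 2)) = ↑(pk α β γ) := by
  rw [lcs_succ_eq _ hk, Subgroup.commutator_def] at hz
  refine Subgroup.closure_induction ?_ ?_ ?_ ?_ hz
  · rintro x ⟨p, hp, q, -, rfl⟩
    exact gen_case hk hp q
  · exact ⟨fun _ => 1, fun _ => 1, fun _ => 1, fun _ => one_mem _, fun _ => one_mem _,
      fun _ => one_mem _, by rw [pk_ones]⟩
  · rintro x y hx hy ⟨α, β, γ, hα, hβ, hγ, hxe⟩ ⟨α', β', γ', hα', hβ', hγ', hye⟩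
    exact ⟨fun i => α i * α' i, fun j => β j * β' j, fun j => γ j * γ' j,
      fun i => mul_mem (hα i) (hα' i), fun j => mul_mem (hβ j) (hβ' j),
      fun j => mul_mem (hγ j) (hγ' j),
      by rw [QuotientGroup.mk_mul, hxe, hye, pk_hom hk α α' β β' γ γ' hα hβ hγ hα' hβ' hγ']⟩
  · rintro x hx ⟨α, β, γ, hα, hβ, hγ, hxe⟩
    exact ⟨fun i => (α i)⁻¹, fun j => (β j)⁻¹, fun j => (γ j)⁻¹,
      fun i => inv_mem (hα i), fun j => inv_mem (hβ j), fun j => inv_mem (hγ j),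
      by rw [QuotientGroup.mk_inv, hxe, pk_inv_mk hk α β γ hα hβ hγ]⟩

end Stmt11Aux

/-- `𝔭_k : (F_k/F_{k+1})^{2g+n-1} → F_{k+1}/F_{k+2}` is a well-defined surjective group
homomorphism: on representatives in `F_k` its value lies in `F_{k+1}`, the class of the
value mod `F_{k+2}` depends only on the classes of the arguments mod `F_{k+1}`, it is
additive, and every class in `F_{k+1}/F_{k+2}` is attained. -/
theorem stmt11 (n g k : ℕ) (hk : 1 ≤ k) :
    -- lands in F_{k+1}
    (∀ (α : Fin (n - 1) → FG n g) (β γ : Fin g → FG n g),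
      (∀ i, α i ∈ lcs (FG n g) k) → (∀ j, β j ∈ lcs (FG n g) k) →
      (∀ j, γ j ∈ lcs (FG n g) k) → pk α β γ ∈ lcs (FG n g) (k + 1)) ∧
    -- well-definedness
    (∀ (α α' : Fin (n - 1) → FG n g) (β β' γ γ' : Fin g → FG n g),
      (∀ i, α i ∈ lcs (FG n g) k) → (∀ j, β j ∈ lcs (FG n g) k) →
      (∀ j, γ j ∈ lcs (FG n g) k) →
      (∀ i, (α i)⁻¹ * α' i ∈ lcs (FG n g) (k + 1)) →
      (∀ j, (β j)⁻¹ * β' j ∈ lcs (FG n g) (k + 1)) →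
      (∀ j, (γ j)⁻¹ * γ' j ∈ lcs (FG n g) (k + 1)) →
      (pk α β γ)⁻¹ * pk α' β' γ' ∈ lcs (FG n g) (k + 2)) ∧
    -- homomorphism
    (∀ (α α' : Fin (n - 1) → FG n g) (β β' γ γ' : Fin g → FG n g),
      (∀ i, α i ∈ lcs (FG n g) k) → (∀ j, β j ∈ lcs (FG n g) k) →
      (∀ j, γ j ∈ lcs (FG n g) k) →
      (∀ i, α' i ∈ lcs (FG n g) k) → (∀ j, β' j ∈ lcs (FG n g) k) →
      (∀ j, γ' j ∈ lcs (FG n g) k) →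
      (pk (fun i => α i * α' i) (fun j => β j * β' j) (fun j => γ j * γ' j))⁻¹ *
        (pk α β γ * pk α' β' γ') ∈ lcs (FG n g) (k + 2)) ∧
    -- surjectivity
    (∀ z ∈ lcs (FG n g) (k + 1), ∃ (α : Fin (n - 1) → FG n g) (β γ : Fin g → FG n g),
      (∀ i, α i ∈ lcs (FG n g) k) ∧ (∀ j, β j ∈ lcs (FG n g) k) ∧
      (∀ j, γ j ∈ lcs (FG n g) k) ∧ z⁻¹ * pk α β γ ∈ lcs (FG n g) (k + 2)) := by
  refine ⟨?_, ?_, ?_, ?_⟩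
  · intro α β γ hα hβ hγ
    unfold pk
    refine mul_mem (Subgroup.list_prod_mem _ ?_) (Subgroup.list_prod_mem _ ?_)
    · intro x hx
      simp only [List.mem_map] at hx
      obtain ⟨i, -, rfl⟩ := hx
      exact Stmt11Aux.pcomm_mem hk (hα i) _
    · intro x hx
      simp only [List.mem_map] at hx
      obtain ⟨j, -, rfl⟩ := hx
      exact mul_mem (Stmt11Aux.pcomm_mem hk (hγ j) _) (Stmt11Aux.pcomm_mem' hk (hβ j) _)
  · intro α α' β β' γ γ' hα hβ hγ dα dβ dγ
    exact QuotientGroup.eq.mp (Stmt11Aux.pk_wd hk α α' β β' γ γ' hα hβ hγ dα dβ dγ).symm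
  · intro α α' β β' γ γ' hα hβ hγ hα' hβ' hγ'
    have h := Stmt11Aux.pk_hom hk α α' β β' γ γ' hα hβ hγ hα' hβ' hγ'
    rw [← QuotientGroup.mk_mul] at h
    exact QuotientGroup.eq.mp h
  · intro z hz
    obtain ⟨α, β, γ, h1, h2, h3, h4⟩ := Stmt11Aux.surj_core hk hz
    exact ⟨α, β, γ, h1, h2, h3, QuotientGroup.eq.mp h4⟩
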